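/- Dual scaling update for the f-block: for γ, τ₁ > 0, a ∈ ℝ^n positive, ξ ∈ ℝ^{n×r} positive, and h₁ ∈ ℝ^r, the unique maximizer f₁ of the concave function f ↦ −τ₁⟨exp(−f/τ₁) − 1, a⟩ − (1/γ)⟨exp(γ f) ⊙ (ξ exp(γ h₁)), 1⟩ satisfies componentwise exp(γ f₁) = ( a / (ξ exp(γ h₁)) )^{τ₁/(τ₁ + 1/γ)}, where ξ exp(γ h₁) denotes the matrix-vector product of ξ with the componentwise exponential of γ h₁. -/

import Mathlib

lemma aux_1d_lt (τ γ A C s t : ℝ) (hτ : 0 < τ) (hγ : 0 < γ) (hA : 0 < A) (hC : 0 < C)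
    (hstat : Real.exp (-s/τ) * A = Real.exp (γ*s) * C) (hne : t ≠ s) :
    -τ*((Real.exp (-t/τ) - 1)*A) - (1/γ)*(Real.exp (γ*t)*C) <
    -τ*((Real.exp (-s/τ) - 1)*A) - (1/γ)*(Real.exp (γ*s)*C) := by
  have h1 : (-t/τ - -s/τ) + 1 < Real.exp (-t/τ - -s/τ) :=
    Real.add_one_lt_exp (by
      intro h
      apply hne
      have := sub_eq_zero.mp h
      field_simp at this
      linarith)
  have h2 : (γ*t - γ*s) + 1 < Real.exp (γ*t - γ*s) :=
    Real.add_one_lt_exp (by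
      intro h
      apply hne
      have := sub_eq_zero.mp h
      exact mul_left_cancel₀ (ne_of_gt hγ) this)
  have e1 : Real.exp (-t/τ) = Real.exp (-s/τ) * Real.exp (-t/τ - -s/τ) := by
    rw [← Real.exp_add]; ring_nf
  have e2 : Real.exp (γ*t) = Real.exp (γ*s) * Real.exp (γ*t - γ*s) := by
    rw [← Real.exp_add]; ring_nf
  have p1 : 0 < Real.exp (-s/τ) := Real.exp_pos _
  have p2 : 0 < Real.exp (γ*s) := Real.exp_pos _
  have H1 : Real.exp (-s/τ) * ((-t/τ - -s/τ) + 1) < Real.exp (-t/τ) := by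
    rw [e1]; exact (mul_lt_mul_iff_right₀ p1).mpr h1
  have H2 : Real.exp (γ*s) * ((γ*t - γ*s) + 1) < Real.exp (γ*t) := by
    rw [e2]; exact (mul_lt_mul_iff_right₀ p2).mpr h2
  have hτ' : τ ≠ 0 := ne_of_gt hτ
  have hγ' : γ ≠ 0 := ne_of_gt hγ
  have K1 : τ * A * (Real.exp (-s/τ) * ((-t/τ - -s/τ) + 1)) < τ * A * Real.exp (-t/τ) :=
    (mul_lt_mul_iff_right₀ (by positivity)).mpr H1
  have K2 : (1/γ) * ((Real.exp (γ*s) * ((γ*t - γ*s) + 1)) * C) < (1/γ) * (Real.exp (γ*t) * C) := by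
    apply (mul_lt_mul_iff_right₀ (by positivity : (0:ℝ) < 1/γ)).mpr
    exact (mul_lt_mul_iff_left₀ hC).mpr H2
  have L1 : τ * A * (Real.exp (-s/τ) * ((-t/τ - -s/τ) + 1))
      = A * Real.exp (-s/τ) * (s - t) + τ * A * Real.exp (-s/τ) := by
    field_simp; ring
  have L2 : (1/γ) * ((Real.exp (γ*s) * ((γ*t - γ*s) + 1)) * C)
      = C * Real.exp (γ*s) * (t - s) + (1/γ) * (Real.exp (γ*s) * C) := by
    field_simp
  rw [L1] at K1; rw [L2] at K2
  have hst : A * Real.exp (-s/τ) * (s - t) + C * Real.exp (γ*s) * (t - s) = 0 := by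
    linear_combination (s - t) * hstat
  linarith [K1, K2, hst]

/-- Dual scaling update for the f-block: the unique maximizer `f₁` of
`f ↦ −τ₁⟨exp(−f/τ₁) − 1, a⟩ − (1/γ)⟨exp(γf) ⊙ (ξ exp(γh₁)), 1⟩` satisfies componentwise
`exp(γ f₁) = (a / (ξ exp(γ h₁)))^{τ₁/(τ₁+1/γ)}`. -/
theorem dual_scaling_update_f_block (n r : ℕ) (hr : 0 < r) (γ τ₁ : ℝ)
    (hγ : 0 < γ) (hτ : 0 < τ₁)
    (a : Fin n → ℝ) (ha : ∀ i, 0 < a i)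
    (ξ : Matrix (Fin n) (Fin r) ℝ) (hξ : ∀ i j, 0 < ξ i j) (h₁ : Fin r → ℝ) :
    let φ : (Fin n → ℝ) → ℝ := fun f =>
      -τ₁ * (∑ i, (Real.exp (-f i / τ₁) - 1) * a i) -
      (1/γ) * ∑ i, Real.exp (γ * f i) * (∑ j, ξ i j * Real.exp (γ * h₁ j))
    ∃ f₁ : Fin n → ℝ,
      (∀ f, φ f ≤ φ f₁) ∧
      (∀ f', (∀ f, φ f ≤ φ f') → f' = f₁) ∧
      (∀ i, Real.exp (γ * f₁ i) =
        (a i / (∑ j, ξ i j * Real.exp (γ * h₁ j))) ^ (τ₁ / (τ₁ + 1/γ))) := by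
  intro φ
  haveI : Nonempty (Fin r) := ⟨⟨0, hr⟩⟩
  set c : Fin n → ℝ := fun i => ∑ j, ξ i j * Real.exp (γ * h₁ j) with hc_def
  have hc : ∀ i, 0 < c i := fun i =>
    Finset.sum_pos (fun j _ => mul_pos (hξ i j) (Real.exp_pos _)) Finset.univ_nonempty
  have hden : (0:ℝ) < γ + 1/τ₁ := by positivity
  have hτ' : τ₁ ≠ 0 := ne_of_gt hτ
  have hγ' : γ ≠ 0 := ne_of_gt hγ
  set f₁ : Fin n → ℝ := fun i => Real.log (a i / c i) / (γ + 1/τ₁) with hf₁_def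
  -- stationarity
  have hkey : ∀ i, γ * f₁ i + f₁ i / τ₁ = Real.log (a i / c i) := by
    intro i
    simp only [hf₁_def]
    field_simp
  have hexp : ∀ i, Real.exp (γ * f₁ i + f₁ i / τ₁) = a i / c i := by
    intro i
    rw [hkey i, Real.exp_log (div_pos (ha i) (hc i))]
  have hstat : ∀ i, Real.exp (-f₁ i / τ₁) * a i = Real.exp (γ * f₁ i) * c i := by
    intro i
    have h2 : Real.exp (γ * f₁ i) = (a i / c i) * Real.exp (-f₁ i / τ₁) := by
      rw [← hexp i, ← Real.exp_add]; ring_nf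
    rw [h2]
    field_simp [(hc i).ne']
  -- separable form
  set g : Fin n → ℝ → ℝ := fun i t =>
    -τ₁*((Real.exp (-t/τ₁) - 1)*(a i)) - (1/γ)*(Real.exp (γ*t)*(c i)) with hg_def
  have hφ : ∀ f, φ f = ∑ i, g i (f i) := by
    intro f
    simp only [φ, hg_def, hc_def]
    rw [Finset.mul_sum, Finset.mul_sum, ← Finset.sum_sub_distrib]
  have hcoord : ∀ i t, g i t ≤ g i (f₁ i) := by
    intro i t
    by_cases h : t = f₁ i
    · rw [h]
    · exact le_of_lt (aux_1d_lt τ₁ γ (a i) (c i) (f₁ i) t hτ hγ (ha i) (hc i) (hstat i) h)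
  have hmax : ∀ f, φ f ≤ φ f₁ := by
    intro f
    rw [hφ f, hφ f₁]
    exact Finset.sum_le_sum fun i _ => hcoord i (f i)
  refine ⟨f₁, hmax, ?_, ?_⟩
  · -- uniqueness
    intro f' hmax'
    funext i
    by_contra hne
    have hlt : φ f' < φ f₁ := by
      rw [hφ f', hφ f₁]
      exact Finset.sum_lt_sum (fun j _ => hcoord j (f' j))
        ⟨i, Finset.mem_univ i,
          aux_1d_lt τ₁ γ (a i) (c i) (f₁ i) (f' i) hτ hγ (ha i) (hc i) (hstat i) hne⟩
    exact absurd (hmax' f₁) (not_le.mpr hlt)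
  · -- formula
    intro i
    rw [Real.rpow_def_of_pos (div_pos (ha i) (hc i))]
    congr 1
    have hden2 : (0:ℝ) < τ₁ + 1/γ := by positivity
    simp only [hf₁_def]
    field_simp
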